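/- Let ω₀ be a positive, even weight function on ℝ all of whose moments exist, and for t ∈ ℝ let ω(x;t) = exp(t x²) ω₀(x), assumed to have all moments finite. Let β_n(t) be the recurrence coefficients of the monic polynomials orthogonal with respect to ω(·;t), i.e. P_{n+1}(x) = x P_n(x) − β_n(t) P_{n−1}(x). Then the β_n satisfy the Volterra (Langmuir lattice) equation dβ_n/dt = β_n (β_{n+1} − β_{n−1}) for all n ≥ 1. -/

import Mathlib

open MeasureTheory Real Polynomial

open Metric

noncomputable def vlm (w0 : ℝ → ℝ) (k : ℕ) (t : ℝ) : ℝ :=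
  ∫ x : ℝ, x ^ k * (Real.exp (t * x ^ 2) * w0 x)

noncomputable def vlB (w0 : ℝ → ℝ) (t : ℝ) (p q : Polynomial ℝ) : ℝ :=
  ∫ x : ℝ, p.eval x * q.eval x * (Real.exp (t * x ^ 2) * w0 x)

noncomputable def vlh (w0 : ℝ → ℝ) (P : ℝ → ℕ → Polynomial ℝ) (n : ℕ) (t : ℝ) : ℝ :=
  vlB w0 t (P t n) (P t n)

noncomputable def vlx (w0 : ℝ → ℝ) (P : ℝ → ℕ → Polynomial ℝ) (n : ℕ) (t : ℝ) : ℝ :=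
  ∫ x : ℝ, x ^ 2 * ((P t n).eval x * (P t n).eval x) * (Real.exp (t * x ^ 2) * w0 x)

section VL
variable (w0 : ℝ → ℝ) (hpos : ∀ x, 0 < w0 x)
  (hint : ∀ (t : ℝ) (k : ℕ), Integrable (fun x : ℝ => x ^ k * (Real.exp (t * x ^ 2) * w0 x)))
  (P : ℝ → ℕ → Polynomial ℝ)
  (hmonic : ∀ t n, (P t n).Monic) (hdeg : ∀ t n, (P t n).natDegree = n)
  (horth : ∀ t, ∀ j k, j ≠ k →
      ∫ x : ℝ, (P t j).eval x * (P t k).eval x * (Real.exp (t * x ^ 2) * w0 x) = 0)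
  (hP0 : ∀ t, P t 0 = 1)

include hint in
lemma vlm_hasDeriv (k : ℕ) (t : ℝ) : HasDerivAt (vlm w0 k) (vlm w0 (k + 2) t) t := by
  unfold vlm
  have key := hasDerivAt_integral_of_dominated_loc_of_deriv_le (μ := volume)
    (F := fun s (x : ℝ) => x ^ k * (Real.exp (s * x ^ 2) * w0 x))
    (F' := fun s (x : ℝ) => x ^ (k + 2) * (Real.exp (s * x ^ 2) * w0 x))
    (bound := fun x : ℝ => |x ^ (k + 2) * (Real.exp ((t + 1) * x ^ 2) * w0 x)|)
    (x₀ := t) (s := ball t 1) (ball_mem_nhds t one_pos)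
    (Filter.Eventually.of_forall fun s => (hint s k).aestronglyMeasurable)
    (hint t k) (hint t (k + 2)).aestronglyMeasurable
    ?_ (hint (t + 1) (k + 2)).abs ?_
  · exact key.2
  · refine Filter.Eventually.of_forall fun x => fun s hs => ?_
    have hsle : s ≤ t + 1 := by
      have h1 := abs_lt.mp (mem_ball_iff_norm.mp hs)
      linarith [h1.2]
    have hexp : Real.exp (s * x ^ 2) ≤ Real.exp ((t + 1) * x ^ 2) :=
      Real.exp_le_exp.mpr (by nlinarith [sq_nonneg x])
    have h1 : |x ^ (k + 2) * (Real.exp (s * x ^ 2) * w0 x)|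
        ≤ |x ^ (k + 2) * (Real.exp ((t + 1) * x ^ 2) * w0 x)| := by
      rw [abs_mul, abs_mul, abs_mul, abs_mul,
        abs_of_pos (Real.exp_pos _), abs_of_pos (Real.exp_pos _)]
      gcongr
    simpa [Real.norm_eq_abs, abs_mul, abs_of_pos (Real.exp_pos _)] using h1
  · refine Filter.Eventually.of_forall fun x => fun s _ => ?_
    have h := (((hasDerivAt_id s).mul_const (x ^ 2)).exp.mul_const (w0 x)).const_mul (x ^ k)
    simp only [id] at h
    refine h.congr_deriv ?_
    ring

include hint in
lemma vl_int (t : ℝ) (e : ℕ) (p : Polynomial ℝ) :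
    Integrable (fun x : ℝ => x ^ e * p.eval x * (Real.exp (t * x ^ 2) * w0 x)) := by
  have : (fun x : ℝ => x ^ e * p.eval x * (Real.exp (t * x ^ 2) * w0 x)) =
      fun x : ℝ => ∑ i ∈ Finset.range (p.natDegree + 1),
        p.coeff i * (x ^ (e + i) * (Real.exp (t * x ^ 2) * w0 x)) := by
    funext x
    rw [Polynomial.eval_eq_sum_range, Finset.mul_sum, Finset.sum_mul]
    refine Finset.sum_congr rfl fun i _ => by rw [pow_add]; ring
  rw [this]
  exact integrable_finset_sum _ fun i _ => (hint t (e + i)).const_mul _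

include hint in
lemma vl_int2 (t : ℝ) (p q : Polynomial ℝ) :
    Integrable (fun x : ℝ => p.eval x * q.eval x * (Real.exp (t * x ^ 2) * w0 x)) := by
  have := vl_int w0 hint t 0 (p * q)
  simpa [pow_zero, one_mul, eval_mul] using this

include hint in
lemma vl_expand (t : ℝ) (e : ℕ) (p q : Polynomial ℝ) (Np Nq : ℕ)
    (hp : p.natDegree < Np) (hq : q.natDegree < Nq) :
    ∫ x : ℝ, x ^ e * (p.eval x * q.eval x) * (Real.exp (t * x ^ 2) * w0 x) =
      ∑ i ∈ Finset.range Np, ∑ j ∈ Finset.range Nq,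
        p.coeff i * q.coeff j * vlm w0 (e + i + j) t := by
  have hpt : (fun x : ℝ => x ^ e * (p.eval x * q.eval x) * (Real.exp (t * x ^ 2) * w0 x)) =
      fun x : ℝ => ∑ i ∈ Finset.range Np, ∑ j ∈ Finset.range Nq,
        p.coeff i * q.coeff j * (x ^ (e + i + j) * (Real.exp (t * x ^ 2) * w0 x)) := by
    funext x
    rw [Polynomial.eval_eq_sum_range' hp, Polynomial.eval_eq_sum_range' hq,
      Finset.sum_mul_sum]
    simp only [Finset.mul_sum, Finset.sum_mul]
    refine Finset.sum_congr rfl fun i _ => Finset.sum_congr rfl fun j _ => ?_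
    rw [pow_add, pow_add]; ring
  rw [hpt, integral_finset_sum]
  · refine Finset.sum_congr rfl fun i _ => ?_
    rw [integral_finset_sum]
    · exact Finset.sum_congr rfl fun j _ => by rw [integral_const_mul]; rfl
    · exact fun j _ => ((hint t (e + i + j)).const_mul _)
  · exact fun i _ => integrable_finset_sum _ fun j _ => ((hint t (e + i + j)).const_mul _)

include hint in
lemma vlB_expand (t : ℝ) (p q : Polynomial ℝ) (Np Nq : ℕ)
    (hp : p.natDegree < Np) (hq : q.natDegree < Nq) :
    vlB w0 t p q = ∑ i ∈ Finset.range Np, ∑ j ∈ Finset.range Nq,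
        p.coeff i * q.coeff j * vlm w0 (i + j) t := by
  have := vl_expand w0 hint t 0 p q Np Nq hp hq
  simp only [pow_zero, one_mul, zero_add] at this
  rw [vlB]
  exact this

include hint in
lemma vlB_add_left (t : ℝ) (p1 p2 q : Polynomial ℝ) :
    vlB w0 t (p1 + p2) q = vlB w0 t p1 q + vlB w0 t p2 q := by
  unfold vlB
  rw [← integral_add (vl_int2 w0 hint t p1 q) (vl_int2 w0 hint t p2 q)]
  exact integral_congr_ae (Filter.Eventually.of_forall fun x => by
    simp only [Polynomial.eval_add]; ring)

include hint in
lemma vlB_sub_left (t : ℝ) (p1 p2 q : Polynomial ℝ) :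
    vlB w0 t (p1 - p2) q = vlB w0 t p1 q - vlB w0 t p2 q := by
  unfold vlB
  rw [← integral_sub (vl_int2 w0 hint t p1 q) (vl_int2 w0 hint t p2 q)]
  exact integral_congr_ae (Filter.Eventually.of_forall fun x => by
    simp only [Polynomial.eval_sub]; ring)

lemma vlB_smul_left (t : ℝ) (c : ℝ) (p q : Polynomial ℝ) :
    vlB w0 t (C c * p) q = c * vlB w0 t p q := by
  unfold vlB
  rw [← integral_const_mul]
  exact integral_congr_ae (Filter.Eventually.of_forall fun x => by
    simp only [Polynomial.eval_mul, Polynomial.eval_C]; ring)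

lemma vlB_comm (t : ℝ) (p q : Polynomial ℝ) : vlB w0 t p q = vlB w0 t q p := by
  unfold vlB
  exact integral_congr_ae (Filter.Eventually.of_forall fun x => by ring)

lemma vlB_zero_right (t : ℝ) (p : Polynomial ℝ) : vlB w0 t p 0 = 0 := by
  unfold vlB; simp

include hint in
lemma vlB_sum_left (t : ℝ) (s : Finset ℕ) (f : ℕ → Polynomial ℝ) (q : Polynomial ℝ) :
    vlB w0 t (∑ j ∈ s, f j) q = ∑ j ∈ s, vlB w0 t (f j) q := by
  induction s using Finset.cons_induction with
  | empty => simpa using vlB_smul_left w0 t 0 0 q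
  | cons a s ha ih =>
    rw [Finset.sum_cons, Finset.sum_cons, vlB_add_left w0 hint, ih]

include hpos in
lemma vl_posB (t : ℝ) (q : Polynomial ℝ) (hq : q ≠ 0)
    (hi : Integrable (fun x : ℝ => q.eval x * q.eval x * (Real.exp (t * x ^ 2) * w0 x))) :
    0 < vlB w0 t q q := by
  rw [vlB]
  have hnn : ∀ x : ℝ, 0 ≤ q.eval x * q.eval x * (Real.exp (t * x ^ 2) * w0 x) := fun x =>
    mul_nonneg (mul_self_nonneg _) (mul_nonneg (Real.exp_pos _).le (hpos x).le)
  rw [integral_pos_iff_support_of_nonneg hnn hi]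
  have hsub : {x : ℝ | ¬ q.IsRoot x} ⊆ Function.support
      (fun x : ℝ => q.eval x * q.eval x * (Real.exp (t * x ^ 2) * w0 x)) := by
    intro x hx
    simp only [Function.mem_support]
    have hne : q.eval x ≠ 0 := hx
    have h1 : 0 < q.eval x * q.eval x := mul_self_pos.mpr hne
    have h2 : 0 < Real.exp (t * x ^ 2) * w0 x := mul_pos (Real.exp_pos _) (hpos x)
    exact ne_of_gt (mul_pos h1 h2)
  have hfin : (volume {x : ℝ | q.IsRoot x}) = 0 :=
    (Polynomial.finite_setOf_isRoot hq).measure_zero _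
  by_contra h
  push_neg at h
  have h0 : volume (Function.support
      (fun x : ℝ => q.eval x * q.eval x * (Real.exp (t * x ^ 2) * w0 x))) = 0 :=
    le_antisymm h (by simp)
  have : (volume : Measure ℝ) Set.univ ≤ 0 := by
    calc (volume : Measure ℝ) Set.univ
        ≤ volume {x : ℝ | q.IsRoot x} + volume {x : ℝ | ¬ q.IsRoot x} := by
          refine le_trans (measure_mono ?_) (measure_union_le _ _)
          intro x _; by_cases hx : q.IsRoot x <;> simp [hx, Polynomial.IsRoot] <;> tauto
      _ ≤ 0 + 0 := by
          gcongr
          · exact le_of_eq hfin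
          · exact le_trans (measure_mono hsub) (le_of_eq h0)
      _ = 0 := by simp
  simp at this

include hpos hint hmonic in
lemma vl_h_pos (n : ℕ) (t : ℝ) : 0 < vlh w0 P n t :=
  vl_posB w0 hpos t (P t n) (hmonic t n).ne_zero (vl_int2 w0 hint t _ _)

include hint hmonic hdeg hP0 in
lemma vl_reduce (t : ℝ) (q : Polynomial ℝ) :
    ∀ m : ℕ, (∀ j, j ≤ m → vlB w0 t q (P t j) = 0) →
      ∀ r : Polynomial ℝ, r.natDegree ≤ m → vlB w0 t q r = 0 := by
  intro m
  induction m with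
  | zero =>
    intro hyp r hr
    rw [Polynomial.eq_C_of_natDegree_le_zero hr]
    have h0 := hyp 0 le_rfl
    rw [hP0 t] at h0
    have : (C (r.coeff 0) : Polynomial ℝ) = C (r.coeff 0) * 1 := by ring
    rw [this, vlB_comm, vlB_smul_left, vlB_comm, h0, mul_zero]
  | succ m ih =>
    intro hyp r hr
    set c := r.coeff (m + 1) with hc
    have hdr' : (r - C c * P t (m + 1)).natDegree ≤ m := by
      rw [Polynomial.natDegree_le_iff_coeff_eq_zero]
      intro N hN
      rw [Polynomial.coeff_sub, Polynomial.coeff_C_mul]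
      rcases eq_or_lt_of_le (Nat.succ_le_of_lt hN) with h | h
      · have hm : (P t (m + 1)).coeff N = 1 := by
          rw [← h]
          have := (hmonic t (m + 1)).coeff_natDegree
          rwa [hdeg t (m + 1)] at this
        rw [hm, ← h, ← hc, mul_one, sub_self]
      · have h1 : r.coeff N = 0 :=
          Polynomial.coeff_eq_zero_of_natDegree_lt (lt_of_le_of_lt hr h)
        have h2 : (P t (m + 1)).coeff N = 0 :=
          Polynomial.coeff_eq_zero_of_natDegree_lt (by rw [hdeg]; exact h)
        rw [h1, h2, mul_zero, sub_zero]
    have hsplit : r = (r - C c * P t (m + 1)) + C c * P t (m + 1) := by ring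
    rw [vlB_comm, hsplit, vlB_add_left w0 hint, vlB_smul_left, vlB_comm,
      vlB_comm w0 t (P t (m+1)) q, hyp (m + 1) le_rfl, mul_zero, add_zero,
      ih (fun j hj => hyp j (le_trans hj (Nat.le_succ m))) _ hdr']

include hint hmonic hdeg horth hP0 in
lemma vl_orthlow (t : ℝ) (n : ℕ) (r : Polynomial ℝ) (hr : r.natDegree < n) :
    vlB w0 t (P t n) r = 0 := by
  refine vl_reduce w0 hint P hmonic hdeg hP0 t (P t n) r.natDegree
    (fun j hj => horth t n j (by omega)) r le_rfl

include hpos hint hmonic hdeg horth hP0 in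
lemma vl_GS (t : ℝ) (n : ℕ) :
    P t n = X ^ n - ∑ j ∈ Finset.range n,
      C (vlB w0 t (X ^ n) (P t j) / vlh w0 P j t) * P t j := by
  rcases Nat.eq_zero_or_pos n with rfl | hn
  · simp [hP0 t]
  set a : ℕ → ℝ := fun j => vlB w0 t (X ^ n) (P t j) / vlh w0 P j t with ha
  set q : Polynomial ℝ := P t n - (X ^ n - ∑ j ∈ Finset.range n, C (a j) * P t j) with hq
  have hsumdeg : ∀ N, n ≤ N → (∑ j ∈ Finset.range n, C (a j) * P t j).coeff N = 0 := by
    intro N hN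
    rw [Polynomial.finset_sum_coeff]
    refine Finset.sum_eq_zero fun j hj => ?_
    have hcz : (P t j).coeff N = 0 := by
      refine Polynomial.coeff_eq_zero_of_natDegree_lt ?_
      rw [hdeg]
      exact lt_of_lt_of_le (Finset.mem_range.mp hj) hN
    rw [Polynomial.coeff_C_mul, hcz, mul_zero]
  have hqdeg : q.natDegree ≤ n - 1 := by
    rw [Polynomial.natDegree_le_iff_coeff_eq_zero]
    intro N hN
    have hnN : n ≤ N := by omega
    rw [hq]
    simp only [Polynomial.coeff_sub, Polynomial.coeff_X_pow]
    rw [hsumdeg N hnN]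
    rcases eq_or_lt_of_le hnN with h | h
    · have hm : (P t n).coeff N = 1 := by
        rw [← h]
        have := (hmonic t n).coeff_natDegree
        rwa [hdeg t n] at this
      rw [hm, if_pos h.symm]
      ring
    · rw [Polynomial.coeff_eq_zero_of_natDegree_lt (by rw [hdeg]; exact h),
        if_neg (by omega : ¬ N = n)]
      ring
  have horthB : ∀ j k, j ≠ k → vlB w0 t (P t j) (P t k) = 0 := fun j k h => horth t j k h
  have hqorth : ∀ j, j ≤ n - 1 → vlB w0 t q (P t j) = 0 := by
    intro j hj
    have hjn : j < n := by omega
    rw [hq, vlB_sub_left w0 hint, vlB_sub_left w0 hint,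
      vlB_sum_left w0 hint]
    have hsum : ∑ j' ∈ Finset.range n, vlB w0 t (C (a j') * P t j') (P t j)
        = a j * vlh w0 P j t := by
      rw [Finset.sum_eq_single j]
      · rw [vlB_smul_left, vlh]
      · intro j' _ hj'
        rw [vlB_smul_left, horthB j' j hj', mul_zero]
      · intro h; exact absurd (Finset.mem_range.mpr hjn) h
    rw [hsum, ha]
    rw [div_mul_cancel₀ _ (ne_of_gt (vl_h_pos w0 hpos hint P hmonic j t)),
      horthB n j (by omega)]
    ring
  have hq0 : q = 0 := by
    by_contra hne
    have := vl_posB w0 hpos t q hne (vl_int2 w0 hint t q q)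
    rw [vl_reduce w0 hint P hmonic hdeg hP0 t q (n - 1) hqorth q hqdeg] at this
    exact lt_irrefl 0 this
  exact sub_eq_zero.mp hq0

include hint in
lemma vlm_diff (k : ℕ) : Differentiable ℝ (vlm w0 k) :=
  fun t => (vlm_hasDeriv w0 hint k t).differentiableAt

include hint hdeg in
lemma vlB_diff_cl (p : Polynomial ℝ) (j : ℕ)
    (hc : ∀ i, Differentiable ℝ fun s => (P s j).coeff i) :
    Differentiable ℝ (fun s => vlB w0 s p (P s j)) := by
  have hfun : (fun s => vlB w0 s p (P s j)) = fun s =>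
      ∑ i ∈ Finset.range (p.natDegree + 1), ∑ j' ∈ Finset.range (j + 1),
        p.coeff i * (P s j).coeff j' * vlm w0 (i + j') s :=
    funext fun s => vlB_expand w0 hint s p (P s j) _ _ (Nat.lt_succ_self _)
      (by rw [hdeg]; exact Nat.lt_succ_self _)
  rw [hfun]
  refine Differentiable.fun_sum fun i _ => Differentiable.fun_sum fun j' _ => ?_
  exact ((differentiable_const _).mul (hc j')).mul (vlm_diff w0 hint _)

include hint hdeg in
lemma vlh_diff (j : ℕ) (hc : ∀ i, Differentiable ℝ fun s => (P s j).coeff i) :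
    Differentiable ℝ (vlh w0 P j) := by
  have hfun : vlh w0 P j = fun s =>
      ∑ i ∈ Finset.range (j + 1), ∑ j' ∈ Finset.range (j + 1),
        (P s j).coeff i * (P s j).coeff j' * vlm w0 (i + j') s :=
    funext fun s => vlB_expand w0 hint s (P s j) (P s j) _ _
      (by rw [hdeg]; exact Nat.lt_succ_self _) (by rw [hdeg]; exact Nat.lt_succ_self _)
  rw [hfun]
  refine Differentiable.fun_sum fun i _ => Differentiable.fun_sum fun j' _ => ?_
  exact ((hc i).mul (hc j')).mul (vlm_diff w0 hint _)

include hpos hint hmonic hdeg horth hP0 in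
lemma vl_coeff_diff : ∀ n i, Differentiable ℝ fun s => (P s n).coeff i := by
  intro n
  induction n using Nat.strong_induction_on with
  | _ n ih =>
    intro i
    have hfun : (fun s => (P s n).coeff i) = fun s =>
        (X ^ n : Polynomial ℝ).coeff i - ∑ j ∈ Finset.range n,
          (vlB w0 s (X ^ n) (P s j) / vlh w0 P j s) * (P s j).coeff i := by
      funext s
      rw [vl_GS w0 hpos hint P hmonic hdeg horth hP0 s n]
      simp only [Polynomial.coeff_sub, Polynomial.finset_sum_coeff, Polynomial.coeff_C_mul]
    rw [hfun]
    refine (differentiable_const _).sub (Differentiable.fun_sum fun j hj => ?_)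
    have hjn : j < n := Finset.mem_range.mp hj
    exact ((vlB_diff_cl w0 hint P hdeg (X ^ n) j (ih j hjn)).div
      (vlh_diff w0 hint P hdeg j (ih j hjn))
      (fun s => ne_of_gt (vl_h_pos w0 hpos hint P hmonic j s))).mul (ih j hjn i)

include hpos hint hmonic hdeg horth hP0 in
lemma vl_h_hasDeriv (n : ℕ) (t : ℝ) : HasDerivAt (vlh w0 P n) (vlx w0 P n t) t := by
  classical
  set c : ℕ → ℝ → ℝ := fun i s => (P s n).coeff i with hcdef
  have hc : ∀ i, Differentiable ℝ (c i) := fun i =>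
    vl_coeff_diff w0 hpos hint P hmonic hdeg horth hP0 n i
  set d : ℕ → ℝ := fun i => deriv (c i) t with hddef
  have hcd : ∀ i, HasDerivAt (c i) (d i) t := fun i => (hc i t).hasDerivAt
  have hcn : c n = fun _ => (1 : ℝ) := funext fun s => by
    have h1 := (hmonic s n).coeff_natDegree
    rw [hdeg s n] at h1
    exact h1
  have hdn : d n = 0 := by
    rw [hddef]
    simp only [hcn]
    exact deriv_const t 1
  have hfun : vlh w0 P n = fun s => ∑ i ∈ Finset.range (n + 1), ∑ j ∈ Finset.range (n + 1),
      c i s * c j s * vlm w0 (i + j) s :=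
    funext fun s => vlB_expand w0 hint s (P s n) (P s n) _ _
      (by rw [hdeg]; exact Nat.lt_succ_self _) (by rw [hdeg]; exact Nat.lt_succ_self _)
  have HD : HasDerivAt (vlh w0 P n)
      (∑ i ∈ Finset.range (n + 1), ∑ j ∈ Finset.range (n + 1),
        ((d i * c j t + c i t * d j) * vlm w0 (i + j) t
          + c i t * c j t * vlm w0 (i + j + 2) t)) t := by
    rw [hfun]
    refine HasDerivAt.fun_sum fun i _ => HasDerivAt.fun_sum fun j _ => ?_
    exact ((hcd i).mul (hcd j)).mul (vlm_hasDeriv w0 hint (i + j) t)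
  convert HD using 1
  have hsplit : ∑ i ∈ Finset.range (n + 1), ∑ j ∈ Finset.range (n + 1),
      ((d i * c j t + c i t * d j) * vlm w0 (i + j) t
        + c i t * c j t * vlm w0 (i + j + 2) t)
      = ((∑ i ∈ Finset.range (n + 1), ∑ j ∈ Finset.range (n + 1),
            d i * c j t * vlm w0 (i + j) t)
        + ∑ i ∈ Finset.range (n + 1), ∑ j ∈ Finset.range (n + 1),
            c i t * d j * vlm w0 (i + j) t)
        + ∑ i ∈ Finset.range (n + 1), ∑ j ∈ Finset.range (n + 1),
            c i t * c j t * vlm w0 (i + j + 2) t := by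
    simp only [← Finset.sum_add_distrib]
    refine Finset.sum_congr rfl fun i _ => Finset.sum_congr rfl fun j _ => by ring
  rw [hsplit]
  -- the symmetric term
  have hsym : ∑ i ∈ Finset.range (n + 1), ∑ j ∈ Finset.range (n + 1),
        c i t * d j * vlm w0 (i + j) t
      = ∑ i ∈ Finset.range (n + 1), ∑ j ∈ Finset.range (n + 1),
        d i * c j t * vlm w0 (i + j) t := by
    rw [Finset.sum_comm]
    refine Finset.sum_congr rfl fun j _ => Finset.sum_congr rfl fun i _ => by
      rw [Nat.add_comm i j]; ring
  rw [hsym]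
  -- identify the first term with vlB t Q (P t n)
  set Q : Polynomial ℝ := ∑ i ∈ Finset.range (n + 1), Polynomial.monomial i (d i) with hQ
  have hQco : ∀ i, i ∈ Finset.range (n + 1) → Q.coeff i = d i := by
    intro i hi
    rw [hQ, Polynomial.finset_sum_coeff]
    simp only [Polynomial.coeff_monomial]
    rw [Finset.sum_ite_eq']
    simp [hi]
  have hQcoz : ∀ N, n - 1 < N → Q.coeff N = 0 := by
    intro N hN
    rcases Nat.lt_or_ge N (n + 1) with h | h
    · have hNn : N = n := by omega
      rw [hNn, hQco n (Finset.mem_range.mpr (Nat.lt_succ_self n)), hdn]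
    · rw [hQ, Polynomial.finset_sum_coeff]
      refine Finset.sum_eq_zero fun i hi => ?_
      rw [Polynomial.coeff_monomial, if_neg (by
        have := Finset.mem_range.mp hi; omega)]
  have hQdeg : Q.natDegree ≤ n - 1 := Polynomial.natDegree_le_iff_coeff_eq_zero.mpr hQcoz
  have hT : ∑ i ∈ Finset.range (n + 1), ∑ j ∈ Finset.range (n + 1),
        d i * c j t * vlm w0 (i + j) t = vlB w0 t Q (P t n) := by
    rw [vlB_expand w0 hint t Q (P t n) (n + 1) (n + 1)
      (by omega) (by rw [hdeg]; exact Nat.lt_succ_self _)]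
    refine Finset.sum_congr rfl fun i hi => Finset.sum_congr rfl fun j _ => by
      rw [hQco i hi]
  have hT0 : vlB w0 t Q (P t n) = 0 := by
    rcases Nat.eq_zero_or_pos n with rfl | hn
    · have hQ0 : Q = 0 := by
        rw [hQ]
        simp [Finset.sum_range_one, hdn]
      rw [hQ0, vlB_comm]
      exact vlB_zero_right w0 t (P t 0)
    · rw [vlB_comm]
      exact vl_orthlow w0 hint P hmonic hdeg horth hP0 t n Q (by omega)
  rw [hT, hT0]
  -- the last term is vlx
  have hS3 : vlx w0 P n t = ∑ i ∈ Finset.range (n + 1), ∑ j ∈ Finset.range (n + 1),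
      c i t * c j t * vlm w0 (i + j + 2) t := by
    rw [vlx, vl_expand w0 hint t 2 (P t n) (P t n) (n + 1) (n + 1)
      (by rw [hdeg]; exact Nat.lt_succ_self _) (by rw [hdeg]; exact Nat.lt_succ_self _)]
    refine Finset.sum_congr rfl fun i _ => Finset.sum_congr rfl fun j _ => by
      rw [show 2 + i + j = i + j + 2 by omega]
  rw [← hS3]
  ring

lemma vlB_X_shift (t : ℝ) (p q : Polynomial ℝ) :
    vlB w0 t (X * p) q = vlB w0 t p (X * q) := by
  unfold vlB
  exact integral_congr_ae (Filter.Eventually.of_forall fun x => by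
    simp only [Polynomial.eval_mul, Polynomial.eval_X]; ring)

include hint in
lemma vlB_add_right (t : ℝ) (p q1 q2 : Polynomial ℝ) :
    vlB w0 t p (q1 + q2) = vlB w0 t p q1 + vlB w0 t p q2 := by
  rw [vlB_comm, vlB_add_left w0 hint, vlB_comm w0 t q1 p, vlB_comm w0 t q2 p]

lemma vlB_smul_right (t : ℝ) (c : ℝ) (p q : Polynomial ℝ) :
    vlB w0 t p (C c * q) = c * vlB w0 t p q := by
  rw [vlB_comm, vlB_smul_left, vlB_comm]

variable (β : ℝ → ℕ → ℝ) (hβ0 : ∀ t, β t 0 = 0)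
  (hP1 : ∀ t, P t 1 = X)
  (hrec : ∀ t n, 1 ≤ n → P t (n + 1) = X * P t n - C (β t n) * P t (n - 1))

include hβ0 hP0 hP1 hrec in
lemma vl_rec0 : ∀ t n, P t (n + 1) = X * P t n - C (β t n) * P t (n - 1) := by
  intro t n
  rcases Nat.eq_zero_or_pos n with rfl | hn
  · rw [hβ0, hP0, hP1]; simp
  · exact hrec t n hn

include hpos hint hmonic hdeg horth hP0 hβ0 hP1 hrec in
lemma vl_hrel (t : ℝ) (n : ℕ) (hn : 1 ≤ n) :
    β t n * vlh w0 P (n - 1) t = vlh w0 P n t := by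
  obtain ⟨m, rfl⟩ : ∃ m, n = m + 1 := ⟨n - 1, by omega⟩
  simp only [Nat.add_sub_cancel]
  have horthB : ∀ j k, j ≠ k → vlB w0 t (P t j) (P t k) = 0 := fun j k h => horth t j k h
  have h0 : vlB w0 t (P t (m + 2)) (P t m) = 0 := horthB (m + 2) m (by omega)
  rw [show m + 2 = (m + 1) + 1 from rfl,
    vl_rec0 P hP0 β hβ0 hP1 hrec t (m + 1)] at h0
  simp only [Nat.add_sub_cancel] at h0
  rw [vlB_sub_left w0 hint, vlB_smul_left] at h0
  have hxs : vlB w0 t (X * P t (m + 1)) (P t m) = vlB w0 t (P t (m + 1)) (X * P t m) :=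
    vlB_X_shift w0 t _ _
  have hrr : (X * P t m - P t (m + 1)).natDegree ≤ m := by
    rw [Polynomial.natDegree_le_iff_coeff_eq_zero]
    intro N hN
    obtain ⟨k, rfl⟩ : ∃ k, N = k + 1 := ⟨N - 1, by omega⟩
    rw [Polynomial.coeff_sub, Polynomial.coeff_X_mul]
    rcases eq_or_lt_of_le (show m + 1 ≤ k + 1 by omega) with h | h
    · have h1 : (P t m).coeff k = 1 := by
        have := (hmonic t m).coeff_natDegree
        rw [hdeg t m] at this
        rwa [show k = m by omega]
      have h2 : (P t (m + 1)).coeff (k + 1) = 1 := by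
        have := (hmonic t (m + 1)).coeff_natDegree
        rw [hdeg t (m + 1)] at this
        rwa [show k + 1 = m + 1 by omega]
      rw [h1, h2, sub_self]
    · rw [Polynomial.coeff_eq_zero_of_natDegree_lt (by rw [hdeg]; omega),
        Polynomial.coeff_eq_zero_of_natDegree_lt (by rw [hdeg]; omega), sub_zero]
  have hsplit : X * P t m = P t (m + 1) + (X * P t m - P t (m + 1)) := by ring
  rw [hxs, hsplit, vlB_add_right w0 hint,
    vl_orthlow w0 hint P hmonic hdeg horth hP0 t (m + 1) (X * P t m - P t (m + 1))
      (Nat.lt_succ_of_le hrr), add_zero] at h0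
  have h2 := sub_eq_zero.mp h0
  simp only [vlh]
  exact h2.symm

include hpos hint hmonic hdeg horth hP0 hβ0 hP1 hrec in
lemma vl_xrel (t : ℝ) (n : ℕ) :
    vlx w0 P n t = vlh w0 P (n + 1) t + (β t n) ^ 2 * vlh w0 P (n - 1) t := by
  have horthB : ∀ j k, j ≠ k → vlB w0 t (P t j) (P t k) = 0 := fun j k h => horth t j k h
  have hx : vlx w0 P n t = vlB w0 t (X * P t n) (X * P t n) := by
    unfold vlx vlB
    exact integral_congr_ae (Filter.Eventually.of_forall fun x => by
      simp only [Polynomial.eval_mul, Polynomial.eval_X]; ring)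
  have hXP : X * P t n = P t (n + 1) + C (β t n) * P t (n - 1) := by
    rw [vl_rec0 P hP0 β hβ0 hP1 hrec t n]; ring
  rw [hx, hXP, vlB_add_left w0 hint, vlB_add_right w0 hint, vlB_add_right w0 hint,
    vlB_smul_left, vlB_smul_right, vlB_smul_left,
    horthB (n + 1) (n - 1) (by omega), vlB_comm w0 t (P t (n - 1)) (P t (n + 1)),
    horthB (n + 1) (n - 1) (by omega), vlB_smul_right]
  simp only [vlh]
  ring

end VL

/-- Let `ω₀` be a positive, even weight on `ℝ` all of whose moments exist,
and let `ω(x;t) = exp(t x²) ω₀(x)` have all moments finite. Then the recurrence coefficients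
`β_n(t)` of the monic polynomials orthogonal with respect to `ω(·;t)` satisfy the Volterra
(Langmuir lattice) equation `dβ_n/dt = β_n (β_{n+1} − β_{n−1})` for all `n ≥ 1`. -/
theorem volterra_lattice (w0 : ℝ → ℝ) (hpos : ∀ x, 0 < w0 x) (heven : ∀ x, w0 (-x) = w0 x)
    (hint : ∀ (t : ℝ) (k : ℕ), Integrable (fun x : ℝ => x ^ k * (Real.exp (t * x ^ 2) * w0 x)))
    (P : ℝ → ℕ → Polynomial ℝ) (β : ℝ → ℕ → ℝ)
    (hmonic : ∀ t n, (P t n).Monic) (hdeg : ∀ t n, (P t n).natDegree = n)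
    (horth : ∀ t, ∀ j k, j ≠ k →
      ∫ x : ℝ, (P t j).eval x * (P t k).eval x * (Real.exp (t * x ^ 2) * w0 x) = 0)
    (hβ0 : ∀ t, β t 0 = 0) (hβpos : ∀ t n, 1 ≤ n → 0 < β t n)
    (hP0 : ∀ t, P t 0 = 1) (hP1 : ∀ t, P t 1 = X)
    (hrec : ∀ t n, 1 ≤ n → P t (n + 1) = X * P t n - C (β t n) * P t (n - 1)) :
    ∀ (n : ℕ), 1 ≤ n → ∀ t : ℝ,
      HasDerivAt (fun s => β s n) (β t n * (β t (n + 1) - β t (n - 1))) t := by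
  intro n hn t
  obtain ⟨m, rfl⟩ : ∃ m, n = m + 1 := ⟨n - 1, by omega⟩
  have hβfun : (fun s => β s (m + 1)) = fun s => vlh w0 P (m + 1) s / vlh w0 P m s := by
    funext s
    have h1 := vl_hrel w0 hpos hint P hmonic hdeg horth hP0 β hβ0 hP1 hrec s (m + 1)
      (Nat.le_add_left 1 m)
    simp only [Nat.add_sub_cancel] at h1
    rw [eq_div_iff (ne_of_gt (vl_h_pos w0 hpos hint P hmonic m s))]
    exact h1
  rw [hβfun]
  have Hn := vl_h_hasDeriv w0 hpos hint P hmonic hdeg horth hP0 (m + 1) t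
  have Hm := vl_h_hasDeriv w0 hpos hint P hmonic hdeg horth hP0 m t
  have H := Hn.div Hm (ne_of_gt (vl_h_pos w0 hpos hint P hmonic m t))
  refine H.congr_deriv ?_
  symm
  rw [vl_xrel w0 hpos hint P hmonic hdeg horth hP0 β hβ0 hP1 hrec t (m + 1),
    vl_xrel w0 hpos hint P hmonic hdeg horth hP0 β hβ0 hP1 hrec t m]
  simp only [Nat.add_sub_cancel]
  have e1 : vlh w0 P (m + 1 + 1) t = β t (m + 1 + 1) * vlh w0 P (m + 1) t := by
    have h1 := vl_hrel w0 hpos hint P hmonic hdeg horth hP0 β hβ0 hP1 hrec t (m + 1 + 1)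
      (Nat.le_add_left 1 (m + 1))
    simp only [Nat.add_sub_cancel] at h1
    exact h1.symm
  have e2 : vlh w0 P (m + 1) t = β t (m + 1) * vlh w0 P m t := by
    have h1 := vl_hrel w0 hpos hint P hmonic hdeg horth hP0 β hβ0 hP1 hrec t (m + 1)
      (Nat.le_add_left 1 m)
    simp only [Nat.add_sub_cancel] at h1
    exact h1.symm
  rw [eq_div_iff (pow_ne_zero 2 (ne_of_gt (vl_h_pos w0 hpos hint P hmonic m t)))]
  rcases Nat.eq_zero_or_pos m with rfl | hm
  · rw [hβ0 t] at *
    rw [e1, e2]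
    ring
  · have e3 : vlh w0 P m t = β t m * vlh w0 P (m - 1) t :=
      (vl_hrel w0 hpos hint P hmonic hdeg horth hP0 β hβ0 hP1 hrec t m hm).symm
    rw [e1, e2, e3]
    ring
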